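/- Let G be a finite simple graph with an orientation of its edges and triangles, largest H-eigenvalue λ₁ and largest Laplacian eigenvalue μ₁. Then λ₁ ≤ max{μ₁, 3·max_{e∈E(G)} △(e)}. Moreover, if the number of triangles of G satisfies t(G) ≤ ⌊(Δ(G)+1)/3⌋, where Δ(G) is the maximum vertex degree, then λ₁ = μ₁. -/
import Mathlib


open scoped Classical
open scoped Matrix

namespace HelmPaper

variable {V : Type} [Fintype V] [DecidableEq V]

/-- The set of triangles of `G`, i.e. the 3-element cliques of `G`. -/
abbrev Triangle (G : SimpleGraph V) : Type :=
  {s : Finset V // s.card = 3 ∧ G.IsClique (s : Set V)}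

/-- An orientation of the edges of `G`: each edge `e` gets a head `e⁺` and a tail `e⁻`. -/
structure Orientation (G : SimpleGraph V) where
  head : G.edgeSet → V
  tail : G.edgeSet → V
  consistent : ∀ e : G.edgeSet, (e : Sym2 V) = s(head e, tail e)

/-- A cyclic orientation of each triangle of `G`, recorded by a representative ordered
triple of its three vertices. -/
structure TriOrientation (G : SimpleGraph V) where
  fst : Triangle G → V
  snd : Triangle G → V
  trd : Triangle G → V
  consistent : ∀ t : Triangle G, ({fst t, snd t, trd t} : Finset V) = t.val

/-- The edge-vertex incidence matrix `B`. -/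
noncomputable def bMat (G : SimpleGraph V) (o : Orientation G) : Matrix G.edgeSet V ℝ :=
  fun e v => if v = o.head e then 1 else if v = o.tail e then -1 else 0

/-- The oriented edge `e` agrees with the cyclic orientation of the triangle `t`. -/
def Agrees {G : SimpleGraph V} (o : Orientation G) (τ : TriOrientation G)
    (e : G.edgeSet) (t : Triangle G) : Prop :=
  (o.tail e = τ.fst t ∧ o.head e = τ.snd t) ∨
  (o.tail e = τ.snd t ∧ o.head e = τ.trd t) ∨
  (o.tail e = τ.trd t ∧ o.head e = τ.fst t)

/-- The oriented edge `e` disagrees with the cyclic orientation of the triangle `t`. -/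
def Disagrees {G : SimpleGraph V} (o : Orientation G) (τ : TriOrientation G)
    (e : G.edgeSet) (t : Triangle G) : Prop :=
  (o.head e = τ.fst t ∧ o.tail e = τ.snd t) ∨
  (o.head e = τ.snd t ∧ o.tail e = τ.trd t) ∨
  (o.head e = τ.trd t ∧ o.tail e = τ.fst t)

/-- The triangle-edge incidence matrix `C`. -/
noncomputable def cMat (G : SimpleGraph V) (o : Orientation G) (τ : TriOrientation G) :
    Matrix (Triangle G) G.edgeSet ℝ :=
  fun t e => if Agrees o τ e t then 1 else if Disagrees o τ e t then -1 else 0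

/-- The Helmholtzian matrix `H(G) = B Bᵀ + Cᵀ C`. -/
noncomputable def helm (G : SimpleGraph V) (o : Orientation G) (τ : TriOrientation G) :
    Matrix G.edgeSet G.edgeSet ℝ :=
  bMat G o * (bMat G o)ᵀ + (cMat G o τ)ᵀ * cMat G o τ

/-- The edge `e` (as an unordered pair of vertices) lies in the triangle `t`. -/
def EdgeInTri (G : SimpleGraph V) (e : Sym2 V) (t : Triangle G) : Prop :=
  ∀ v ∈ e, v ∈ t.val

/-- The triangle degree `△(e)`: the number of triangles of `G` containing the edge `e`. -/
noncomputable def triDeg (G : SimpleGraph V) (e : Sym2 V) : ℕ :=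
  (Finset.univ.filter fun t : Triangle G => EdgeInTri G e t).card


end HelmPaper

namespace HelmPaper
section Spec
variable {n : Type} [Fintype n] [DecidableEq n]
set_option linter.unusedSectionVars false

lemma dotProduct_self_pos {v : n → ℝ} (hv : v ≠ 0) : 0 < v ⬝ᵥ v := by
  have h0 : (0:ℝ) ≤ v ⬝ᵥ v := Finset.sum_nonneg fun i _ => mul_self_nonneg _
  rcases h0.lt_or_eq with h | h
  · exact h
  · exact absurd (dotProduct_self_eq_zero.mp h.symm) hv

lemma mem_spectrum_iff {M : Matrix n n ℝ} {lam : ℝ} :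
    lam ∈ spectrum ℝ M ↔ ∃ v, v ≠ 0 ∧ M *ᵥ v = lam • v := by
  rw [spectrum.mem_iff, Matrix.isUnit_iff_isUnit_det, isUnit_iff_ne_zero, not_not,
    ← Matrix.exists_mulVec_eq_zero_iff]
  have key : ∀ v : n → ℝ, ((algebraMap ℝ (Matrix n n ℝ)) lam - M) *ᵥ v = 0 ↔ M *ᵥ v = lam • v := by
    intro v
    rw [Matrix.sub_mulVec, sub_eq_zero, Matrix.algebraMap_eq_diagonal]
    constructor
    · intro h
      rw [← h]
      ext i
      simp [Matrix.mulVec_diagonal]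
    · intro h
      rw [h]
      ext i
      simp [Matrix.mulVec_diagonal]
  constructor
  · rintro ⟨v, hv, h⟩; exact ⟨v, hv, (key v).mp h⟩
  · rintro ⟨v, hv, h⟩; exact ⟨v, hv, (key v).mpr h⟩







lemma star_transpose_real (U : Matrix n n ℝ) : (star U)ᵀ = U := by
  ext i j
  simp [Matrix.star_eq_conjTranspose, Matrix.conjTranspose_apply]

lemma rayleigh_aux (U : Matrix n n ℝ) (hU : U ∈ Matrix.unitaryGroup n ℝ)
    (d : n → ℝ) {c : ℝ} (hd : ∀ i, d i ≤ c) (x : n → ℝ) :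
    x ⬝ᵥ ((U * Matrix.diagonal d * star U) *ᵥ x) ≤ c * (x ⬝ᵥ x) := by
  set y : n → ℝ := star U *ᵥ x with hy
  have hyy : y ⬝ᵥ y = x ⬝ᵥ x := by
    calc y ⬝ᵥ y = x ⬝ᵥ ((star U)ᵀ *ᵥ y) := by
          rw [dotProduct_comm, Matrix.dotProduct_mulVec, ← Matrix.mulVec_transpose,
            dotProduct_comm]
    _ = x ⬝ᵥ (((star U)ᵀ * star U) *ᵥ x) := by rw [hy, Matrix.mulVec_mulVec]
    _ = x ⬝ᵥ x := by
        rw [star_transpose_real, (Matrix.mem_unitaryGroup_iff).mp hU]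
        simp
  have hsU : star U = Uᵀ := by
    ext i j; simp [Matrix.star_eq_conjTranspose, Matrix.conjTranspose_apply]
  have hMx : x ⬝ᵥ ((U * Matrix.diagonal d * star U) *ᵥ x) = y ⬝ᵥ (Matrix.diagonal d *ᵥ y) := by
    calc x ⬝ᵥ ((U * Matrix.diagonal d * star U) *ᵥ x)
        = x ⬝ᵥ (U *ᵥ ((Matrix.diagonal d * star U) *ᵥ x)) := by
          rw [Matrix.mulVec_mulVec, mul_assoc]
      _ = (x ᵥ* U) ⬝ᵥ ((Matrix.diagonal d * star U) *ᵥ x) := Matrix.dotProduct_mulVec _ _ _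
      _ = y ⬝ᵥ (Matrix.diagonal d *ᵥ y) := by
          rw [hy, hsU, Matrix.mulVec_transpose, ← Matrix.mulVec_mulVec, Matrix.mulVec_transpose]
  rw [hMx]
  have h1 : y ⬝ᵥ (Matrix.diagonal d *ᵥ y) = ∑ i, d i * (y i * y i) := by
    simp only [dotProduct, Matrix.mulVec_diagonal]
    exact Finset.sum_congr rfl fun i _ => by ring
  have h2 : c * (x ⬝ᵥ x) = ∑ i, c * (y i * y i) := by
    rw [← hyy, dotProduct, Finset.mul_sum]
  rw [h1, h2]
  exact Finset.sum_le_sum fun i _ =>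
    mul_le_mul_of_nonneg_right (hd i) (mul_self_nonneg _)

lemma rayleigh_le {M : Matrix n n ℝ} (hM : M.IsHermitian) {c : ℝ}
    (hc : ∀ i, hM.eigenvalues i ≤ c) (x : n → ℝ) :
    x ⬝ᵥ (M *ᵥ x) ≤ c * (x ⬝ᵥ x) := by
  have hspec := hM.spectral_theorem
  have hd : Matrix.diagonal (RCLike.ofReal ∘ hM.eigenvalues) = Matrix.diagonal hM.eigenvalues := by
    ext i j; simp [Matrix.diagonal]
  rw [hd] at hspec
  conv_lhs => rw [hspec]
  exact rayleigh_aux _ hM.eigenvectorUnitary.2 _ hc x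

lemma isGreatest_spectrum [Nonempty n] {M : Matrix n n ℝ} (hM : M.IsHermitian) :
    IsGreatest (spectrum ℝ M) (Finset.univ.sup' Finset.univ_nonempty hM.eigenvalues) := by
  constructor
  · obtain ⟨i, _, hi⟩ := Finset.exists_mem_eq_sup' Finset.univ_nonempty hM.eigenvalues
    rw [hi]
    exact hM.eigenvalues_mem_spectrum_real i
  · intro lam hlam
    obtain ⟨v, hv, hMv⟩ := mem_spectrum_iff.mp hlam
    have h1 : v ⬝ᵥ (M *ᵥ v) = lam * (v ⬝ᵥ v) := by
      rw [hMv]; simp [dotProduct_smul]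
    have h2 := rayleigh_le hM
      (c := Finset.univ.sup' Finset.univ_nonempty hM.eigenvalues)
      (fun i => Finset.le_sup' hM.eigenvalues (Finset.mem_univ i)) v
    rw [h1] at h2
    exact le_of_mul_le_mul_right h2 (dotProduct_self_pos hv)






lemma eig_le_rowsum {M : Matrix n n ℝ} {lam : ℝ} {v : n → ℝ} (hv : v ≠ 0)
    (h : M *ᵥ v = lam • v) {c : ℝ} (hc : ∀ i, ∑ j, |M i j| ≤ c) : lam ≤ c := by
  have hne : Finset.univ.Nonempty (α := n) := by
    rcases Function.ne_iff.mp hv with ⟨i, _⟩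
    exact ⟨i, Finset.mem_univ i⟩
  obtain ⟨i₀, _, hi₀⟩ := Finset.exists_max_image Finset.univ (fun i => |v i|) hne
  have hvi₀ : 0 < |v i₀| := by
    rcases Function.ne_iff.mp hv with ⟨j, hj⟩
    exact lt_of_lt_of_le (abs_pos.mpr hj) (hi₀ j (Finset.mem_univ j))
  have key : |lam| * |v i₀| ≤ c * |v i₀| := by
    have h1 : lam * v i₀ = ∑ j, M i₀ j * v j := by
      have := congrFun h i₀
      simpa [Matrix.mulVec, dotProduct, mul_comm] using this.symm
    calc |lam| * |v i₀| = |lam * v i₀| := (abs_mul _ _).symm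
      _ = |∑ j, M i₀ j * v j| := by rw [h1]
      _ ≤ ∑ j, |M i₀ j * v j| := Finset.abs_sum_le_sum_abs _ _
      _ ≤ ∑ j, |M i₀ j| * |v i₀| := by
          refine Finset.sum_le_sum fun j _ => ?_
          rw [abs_mul]
          exact mul_le_mul_of_nonneg_left (hi₀ j (Finset.mem_univ j)) (abs_nonneg _)
      _ = (∑ j, |M i₀ j|) * |v i₀| := by rw [Finset.sum_mul]
      _ ≤ c * |v i₀| := mul_le_mul_of_nonneg_right (hc i₀) (abs_nonneg _)
  exact (le_abs_self lam).trans (le_of_mul_le_mul_right key hvi₀)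



end Spec
end HelmPaper

namespace HelmPaper
variable {V : Type} [Fintype V] [DecidableEq V]
set_option linter.unusedSectionVars false
set_option linter.unreachableTactic false
set_option linter.unusedTactic false
set_option maxHeartbeats 1000000

section Comb
variable (G : SimpleGraph V) (o : Orientation G) (τ : TriOrientation G)

lemma tri_mem (t : Triangle G) :
    τ.fst t ∈ t.val ∧ τ.snd t ∈ t.val ∧ τ.trd t ∈ t.val := by
  have h := τ.consistent t
  refine ⟨?_, ?_, ?_⟩ <;> (rw [← h]; simp)

lemma tri_ne (t : Triangle G) :
    τ.fst t ≠ τ.snd t ∧ τ.snd t ≠ τ.trd t ∧ τ.fst t ≠ τ.trd t := by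
  have h := τ.consistent t
  have hcard : ({τ.fst t, τ.snd t, τ.trd t} : Finset V).card = 3 := by
    rw [h]; exact t.2.1
  have pair2 : ∀ x y : V, ({x, y} : Finset V).card ≤ 2 := fun x y =>
    le_trans (Finset.card_insert_le _ _) (by simp)
  refine ⟨?_, ?_, ?_⟩ <;> intro he <;> rw [he] at hcard
  · rw [Finset.insert_idem] at hcard
    have := pair2 (τ.snd t) (τ.trd t); omega
  · rw [Finset.pair_eq_singleton] at hcard
    have := pair2 (τ.fst t) (τ.trd t); omega
  · rw [show ({τ.trd t, τ.snd t, τ.trd t} : Finset V) = {τ.snd t, τ.trd t} by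
      ext x; simp [or_comm, or_assoc, or_left_comm]] at hcard
    have := pair2 (τ.snd t) (τ.trd t); omega


lemma tri_adj (t : Triangle G) :
    (t.val : Set V).Pairwise G.Adj := t.2.2

lemma tri_edge_mem (t : Triangle G) :
    s(τ.fst t, τ.snd t) ∈ G.edgeSet ∧ s(τ.snd t, τ.trd t) ∈ G.edgeSet ∧
      s(τ.trd t, τ.fst t) ∈ G.edgeSet := by
  obtain ⟨h1, h2, h3⟩ := tri_mem G τ t
  obtain ⟨hab, hbc, hac⟩ := tri_ne G τ t
  have hcl := t.2.2
  exact ⟨hcl (Finset.mem_coe.mpr h1) (Finset.mem_coe.mpr h2) hab,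
    hcl (Finset.mem_coe.mpr h2) (Finset.mem_coe.mpr h3) hbc,
    hcl (Finset.mem_coe.mpr h3) (Finset.mem_coe.mpr h1) (Ne.symm hac)⟩

lemma prod_formula₁ (t : Triangle G) (e : G.edgeSet) (v : V)
    (he : (e : Sym2 V) = s(τ.fst t, τ.snd t)) :
    cMat G o τ t e * bMat G o e v =
      (if v = τ.snd t then (1:ℝ) else 0) - (if v = τ.fst t then 1 else 0) := by
  obtain ⟨hab, hbc, hac⟩ := tri_ne G τ t
  have hcons := (o.consistent e).symm.trans he
  rw [Sym2.eq_iff] at hcons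
  rcases hcons with ⟨h1, h2⟩ | ⟨h1, h2⟩
  · have hnAg : ¬ Agrees o τ e t := by
      unfold Agrees; rw [h1, h2]
      rintro (⟨x, y⟩ | ⟨x, y⟩ | ⟨x, y⟩) <;>
        first
          | exact hab x | exact hab x.symm | exact hab y | exact hab y.symm
          | exact hbc x | exact hbc x.symm | exact hbc y | exact hbc y.symm
          | exact hac x | exact hac x.symm | exact hac y | exact hac y.symm
    have hDis : Disagrees o τ e t := Or.inl ⟨h1, h2⟩
    simp only [cMat, bMat, if_neg hnAg, if_pos hDis, h1, h2]
    split_ifs <;> simp_all <;> ring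
  · have hAg : Agrees o τ e t := Or.inl ⟨h2, h1⟩
    simp only [cMat, bMat, if_pos hAg, h1, h2]
    split_ifs <;> simp_all <;> ring

lemma prod_formula₂ (t : Triangle G) (e : G.edgeSet) (v : V)
    (he : (e : Sym2 V) = s(τ.snd t, τ.trd t)) :
    cMat G o τ t e * bMat G o e v =
      (if v = τ.trd t then (1:ℝ) else 0) - (if v = τ.snd t then 1 else 0) := by
  obtain ⟨hab, hbc, hac⟩ := tri_ne G τ t
  have hcons := (o.consistent e).symm.trans he
  rw [Sym2.eq_iff] at hcons
  rcases hcons with ⟨h1, h2⟩ | ⟨h1, h2⟩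
  · have hnAg : ¬ Agrees o τ e t := by
      unfold Agrees; rw [h1, h2]
      rintro (⟨x, y⟩ | ⟨x, y⟩ | ⟨x, y⟩) <;>
        first
          | exact hab x | exact hab x.symm | exact hab y | exact hab y.symm
          | exact hbc x | exact hbc x.symm | exact hbc y | exact hbc y.symm
          | exact hac x | exact hac x.symm | exact hac y | exact hac y.symm
    have hDis : Disagrees o τ e t := Or.inr (Or.inl ⟨h1, h2⟩)
    simp only [cMat, bMat, if_neg hnAg, if_pos hDis, h1, h2]
    split_ifs <;> simp_all <;> ring
  · have hAg : Agrees o τ e t := Or.inr (Or.inl ⟨h2, h1⟩)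
    simp only [cMat, bMat, if_pos hAg, h1, h2]
    split_ifs <;> simp_all <;> ring

lemma prod_formula₃ (t : Triangle G) (e : G.edgeSet) (v : V)
    (he : (e : Sym2 V) = s(τ.trd t, τ.fst t)) :
    cMat G o τ t e * bMat G o e v =
      (if v = τ.fst t then (1:ℝ) else 0) - (if v = τ.trd t then 1 else 0) := by
  obtain ⟨hab, hbc, hac⟩ := tri_ne G τ t
  have hcons := (o.consistent e).symm.trans he
  rw [Sym2.eq_iff] at hcons
  rcases hcons with ⟨h1, h2⟩ | ⟨h1, h2⟩
  · have hnAg : ¬ Agrees o τ e t := by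
      unfold Agrees; rw [h1, h2]
      rintro (⟨x, y⟩ | ⟨x, y⟩ | ⟨x, y⟩) <;>
        first
          | exact hab x | exact hab x.symm | exact hab y | exact hab y.symm
          | exact hbc x | exact hbc x.symm | exact hbc y | exact hbc y.symm
          | exact hac x | exact hac x.symm | exact hac y | exact hac y.symm
    have hDis : Disagrees o τ e t := Or.inr (Or.inr ⟨h1, h2⟩)
    simp only [cMat, bMat, if_neg hnAg, if_pos hDis, h1, h2]
    split_ifs <;> simp_all <;> ring
  · have hAg : Agrees o τ e t := Or.inr (Or.inr ⟨h2, h1⟩)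
    simp only [cMat, bMat, if_pos hAg, h1, h2]
    split_ifs <;> simp_all <;> ring

lemma cMat_eq_zero (t : Triangle G) (e : G.edgeSet)
    (h1 : (e : Sym2 V) ≠ s(τ.fst t, τ.snd t))
    (h2 : (e : Sym2 V) ≠ s(τ.snd t, τ.trd t))
    (h3 : (e : Sym2 V) ≠ s(τ.trd t, τ.fst t)) :
    cMat G o τ t e = 0 := by
  have hcons := o.consistent e
  have hnAg : ¬ Agrees o τ e t := by
    rintro (⟨x, y⟩ | ⟨x, y⟩ | ⟨x, y⟩)
    · exact h1 (by rw [hcons, x, y, Sym2.eq_swap])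
    · exact h2 (by rw [hcons, x, y, Sym2.eq_swap])
    · exact h3 (by rw [hcons, x, y, Sym2.eq_swap])
  have hnDis : ¬ Disagrees o τ e t := by
    rintro (⟨x, y⟩ | ⟨x, y⟩ | ⟨x, y⟩)
    · exact h1 (by rw [hcons, x, y])
    · exact h2 (by rw [hcons, x, y])
    · exact h3 (by rw [hcons, x, y])
  simp only [cMat, if_neg hnAg, if_neg hnDis]

lemma abs_cMat_le_one (t : Triangle G) (e : G.edgeSet) : |cMat G o τ t e| ≤ 1 := by
  unfold cMat; split_ifs <;> norm_num

lemma edgeInTri_of_cMat_ne_zero (t : Triangle G) (e : G.edgeSet)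
    (h : cMat G o τ t e ≠ 0) : EdgeInTri G (e : Sym2 V) t := by
  obtain ⟨ha, hb, hc⟩ := tri_mem G τ t
  have hAD : Agrees o τ e t ∨ Disagrees o τ e t := by
    by_contra hcon
    push_neg at hcon
    exact h (by simp only [cMat, if_neg hcon.1, if_neg hcon.2])
  have hht : o.head e ∈ t.val ∧ o.tail e ∈ t.val := by
    rcases hAD with (⟨x, y⟩ | ⟨x, y⟩ | ⟨x, y⟩) | (⟨x, y⟩ | ⟨x, y⟩ | ⟨x, y⟩) <;>
      rw [x, y] <;> exact ⟨by assumption, by assumption⟩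
  intro v hv
  rw [o.consistent e, Sym2.mem_iff] at hv
  rcases hv with rfl | rfl
  · exact hht.1
  · exact hht.2


lemma cMat_mul_bMat (t : Triangle G) (v : V) :
    ∑ e : G.edgeSet, cMat G o τ t e * bMat G o e v = 0 := by
  obtain ⟨hab, hbc, hac⟩ := tri_ne G τ t
  obtain ⟨hm1, hm2, hm3⟩ := tri_edge_mem G τ t
  set e₁ : G.edgeSet := ⟨s(τ.fst t, τ.snd t), hm1⟩ with he₁
  set e₂ : G.edgeSet := ⟨s(τ.snd t, τ.trd t), hm2⟩ with he₂
  set e₃ : G.edgeSet := ⟨s(τ.trd t, τ.fst t), hm3⟩ with he₃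
  have h12 : e₁ ≠ e₂ := by
    simp only [he₁, he₂, Ne, Subtype.mk_eq_mk, Sym2.eq_iff]
    rintro (⟨x, y⟩ | ⟨x, y⟩) <;>
      first
        | exact hab x | exact hab x.symm | exact hab y | exact hab y.symm
        | exact hbc x | exact hbc x.symm | exact hbc y | exact hbc y.symm
        | exact hac x | exact hac x.symm | exact hac y | exact hac y.symm
  have h13 : e₁ ≠ e₃ := by
    simp only [he₁, he₃, Ne, Subtype.mk_eq_mk, Sym2.eq_iff]
    rintro (⟨x, y⟩ | ⟨x, y⟩) <;>
      first
        | exact hab x | exact hab x.symm | exact hab y | exact hab y.symm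
        | exact hbc x | exact hbc x.symm | exact hbc y | exact hbc y.symm
        | exact hac x | exact hac x.symm | exact hac y | exact hac y.symm
  have h23 : e₂ ≠ e₃ := by
    simp only [he₂, he₃, Ne, Subtype.mk_eq_mk, Sym2.eq_iff]
    rintro (⟨x, y⟩ | ⟨x, y⟩) <;>
      first
        | exact hab x | exact hab x.symm | exact hab y | exact hab y.symm
        | exact hbc x | exact hbc x.symm | exact hbc y | exact hbc y.symm
        | exact hac x | exact hac x.symm | exact hac y | exact hac y.symm
  have hpt : ∀ e : G.edgeSet, cMat G o τ t e * bMat G o e v =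
      (if e = e₁ then (if v = τ.snd t then (1:ℝ) else 0) - (if v = τ.fst t then 1 else 0)
        else 0) +
      (if e = e₂ then (if v = τ.trd t then (1:ℝ) else 0) - (if v = τ.snd t then 1 else 0)
        else 0) +
      (if e = e₃ then (if v = τ.fst t then (1:ℝ) else 0) - (if v = τ.trd t then 1 else 0)
        else 0) := by
    intro e
    by_cases h1 : e = e₁
    · rw [if_pos h1, if_neg (fun hc => h12 (h1.symm.trans hc)),
        if_neg (fun hc => h13 (h1.symm.trans hc)), add_zero, add_zero]
      exact prod_formula₁ G o τ t e v (by rw [h1])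
    · by_cases h2 : e = e₂
      · rw [if_neg h1, if_pos h2, if_neg (fun hc => h23 (h2.symm.trans hc)), zero_add, add_zero]
        exact prod_formula₂ G o τ t e v (by rw [h2])
      · by_cases h3 : e = e₃
        · rw [if_neg h1, if_neg h2, if_pos h3, zero_add, zero_add]
          exact prod_formula₃ G o τ t e v (by rw [h3])
        · rw [if_neg h1, if_neg h2, if_neg h3, add_zero, add_zero]
          rw [cMat_eq_zero G o τ t e (fun hc => h1 (Subtype.ext hc))
            (fun hc => h2 (Subtype.ext hc)) (fun hc => h3 (Subtype.ext hc)), zero_mul]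
  rw [Finset.sum_congr rfl fun e _ => hpt e]
  rw [Finset.sum_add_distrib, Finset.sum_add_distrib, Finset.sum_ite_eq' Finset.univ e₁,
    Finset.sum_ite_eq' Finset.univ e₂, Finset.sum_ite_eq' Finset.univ e₃]
  simp only [Finset.mem_univ, if_pos]
  ring

lemma cMat_mul_bMat_eq_zero : cMat G o τ * bMat G o = 0 := by
  ext t v
  rw [Matrix.mul_apply, Matrix.zero_apply]
  exact cMat_mul_bMat G o τ t v


lemma sum_abs_cMat_row (t : Triangle G) : ∑ f : G.edgeSet, |cMat G o τ t f| ≤ 3 := by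
  obtain ⟨hm1, hm2, hm3⟩ := tri_edge_mem G τ t
  set e₁ : G.edgeSet := ⟨s(τ.fst t, τ.snd t), hm1⟩
  set e₂ : G.edgeSet := ⟨s(τ.snd t, τ.trd t), hm2⟩
  set e₃ : G.edgeSet := ⟨s(τ.trd t, τ.fst t), hm3⟩
  have hb : ∀ f : G.edgeSet, |cMat G o τ t f| ≤
      (if f = e₁ then (1:ℝ) else 0) + (if f = e₂ then 1 else 0) + (if f = e₃ then 1 else 0) := by
    intro f
    have habs := abs_cMat_le_one G o τ t f
    by_cases h1 : f = e₁
    · rw [if_pos h1]; split_ifs <;> linarith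
    by_cases h2 : f = e₂
    · rw [if_neg h1, if_pos h2]; split_ifs <;> linarith
    by_cases h3 : f = e₃
    · rw [if_neg h1, if_neg h2, if_pos h3]; linarith
    rw [if_neg h1, if_neg h2, if_neg h3, cMat_eq_zero G o τ t f
      (fun hc => h1 (Subtype.ext hc)) (fun hc => h2 (Subtype.ext hc))
      (fun hc => h3 (Subtype.ext hc))]
    norm_num
  calc ∑ f : G.edgeSet, |cMat G o τ t f| ≤
      ∑ f : G.edgeSet, ((if f = e₁ then (1:ℝ) else 0) + (if f = e₂ then 1 else 0)
        + (if f = e₃ then 1 else 0)) := Finset.sum_le_sum fun f _ => hb f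
    _ = 3 := by
        rw [Finset.sum_add_distrib, Finset.sum_add_distrib, Finset.sum_ite_eq' Finset.univ e₁,
          Finset.sum_ite_eq' Finset.univ e₂, Finset.sum_ite_eq' Finset.univ e₃]
        norm_num

lemma abs_cMat_le_ind (t : Triangle G) (e : G.edgeSet) :
    |cMat G o τ t e| ≤ (if EdgeInTri G (e : Sym2 V) t then (1:ℝ) else 0) := by
  by_cases h : EdgeInTri G (e : Sym2 V) t
  · rw [if_pos h]; exact abs_cMat_le_one G o τ t e
  · rw [if_neg h]
    have : cMat G o τ t e = 0 := by
      by_contra hc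
      exact h (edgeInTri_of_cMat_ne_zero G o τ t e hc)
    rw [this, abs_zero]

lemma rowsum_CtC (e : G.edgeSet) :
    ∑ f : G.edgeSet, |((cMat G o τ)ᵀ * cMat G o τ) e f| ≤ 3 * (triDeg G (e : Sym2 V) : ℝ) := by
  have step1 : ∀ f : G.edgeSet, |((cMat G o τ)ᵀ * cMat G o τ) e f| ≤
      ∑ t : Triangle G, |cMat G o τ t e| * |cMat G o τ t f| := by
    intro f
    rw [Matrix.mul_apply]
    refine (Finset.abs_sum_le_sum_abs _ _).trans (le_of_eq (Finset.sum_congr rfl fun t _ => ?_))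
    rw [Matrix.transpose_apply, abs_mul]
  calc ∑ f : G.edgeSet, |((cMat G o τ)ᵀ * cMat G o τ) e f|
      ≤ ∑ f : G.edgeSet, ∑ t : Triangle G, |cMat G o τ t e| * |cMat G o τ t f| :=
        Finset.sum_le_sum fun f _ => step1 f
    _ = ∑ t : Triangle G, |cMat G o τ t e| * ∑ f : G.edgeSet, |cMat G o τ t f| := by
        rw [Finset.sum_comm]
        exact Finset.sum_congr rfl fun t _ => by rw [Finset.mul_sum]
    _ ≤ ∑ t : Triangle G, |cMat G o τ t e| * 3 :=
        Finset.sum_le_sum fun t _ =>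
          mul_le_mul_of_nonneg_left (sum_abs_cMat_row G o τ t) (abs_nonneg _)
    _ ≤ ∑ t : Triangle G, (if EdgeInTri G (e : Sym2 V) t then (1:ℝ) else 0) * 3 :=
        Finset.sum_le_sum fun t _ =>
          mul_le_mul_of_nonneg_right (abs_cMat_le_ind G o τ t e) (by norm_num)
    _ = 3 * (triDeg G (e : Sym2 V) : ℝ) := by
        rw [← Finset.sum_mul, mul_comm, triDeg]
        norm_num [Finset.sum_boole]

lemma head_ne_tail (e : G.edgeSet) : o.head e ≠ o.tail e := by
  have h := e.2
  rw [o.consistent e, SimpleGraph.mem_edgeSet] at h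
  exact h.ne

lemma bMat_mulVec (x : V → ℝ) (e : G.edgeSet) :
    (bMat G o *ᵥ x) e = x (o.head e) - x (o.tail e) := by
  have hne := head_ne_tail G o e
  have hpt : ∀ v : V, bMat G o e v * x v =
      (if v = o.head e then (1:ℝ) else 0) * x v - (if v = o.tail e then 1 else 0) * x v := by
    intro v
    unfold bMat
    split_ifs with h1 h2 <;> simp_all <;> ring
  calc (bMat G o *ᵥ x) e = ∑ v : V, bMat G o e v * x v := by
        rw [Matrix.mulVec, dotProduct]
    _ = ∑ v : V, ((if v = o.head e then (1:ℝ) else 0) * x v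
        - (if v = o.tail e then 1 else 0) * x v) := Finset.sum_congr rfl fun v _ => hpt v
    _ = x (o.head e) - x (o.tail e) := by
        rw [Finset.sum_sub_distrib]
        congr 1
        · rw [Finset.sum_congr rfl fun v _ => ite_zero_mul (v = o.head e) 1 (x v),
            Finset.sum_ite_eq' Finset.univ (o.head e) (fun v => 1 * x v)]
          simp
        · rw [Finset.sum_congr rfl fun v _ => ite_zero_mul (v = o.tail e) 1 (x v),
            Finset.sum_ite_eq' Finset.univ (o.tail e) (fun v => 1 * x v)]
          simp


lemma isHermitian_mul_transpose_self' {m n : Type} [Fintype m] [Fintype n] [DecidableEq m]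
    (A : Matrix m n ℝ) : (A * Aᵀ).IsHermitian := by
  rw [← Matrix.conjTranspose_eq_transpose_of_trivial]
  exact Matrix.isHermitian_mul_conjTranspose_self A

lemma isHermitian_transpose_mul_self' {m n : Type} [Fintype m] [Fintype n] [DecidableEq n]
    (A : Matrix m n ℝ) : (Aᵀ * A).IsHermitian := by
  rw [← Matrix.conjTranspose_eq_transpose_of_trivial]
  exact Matrix.isHermitian_conjTranspose_mul_self A

/-- The Rayleigh-quotient lower bound `Δ(G) + 1 ≤ μ₁`. -/
lemma maxDegree_lt_sSup_spec [Nonempty G.edgeSet] :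
    (G.maxDegree : ℝ) + 1 ≤ sSup (spectrum ℝ ((bMat G o)ᵀ * bMat G o)) := by
  classical
  have e₀ : G.edgeSet := Classical.arbitrary _
  have hV : Nonempty V := ⟨o.head e₀⟩
  obtain ⟨v₀, hv₀⟩ := G.exists_maximal_degree_vertex
  set d : ℕ := G.maxDegree with hd
  have hd1 : 1 ≤ d := by
    have hadj : G.Adj (o.head e₀) (o.tail e₀) := by
      have h := e₀.2
      rwa [o.consistent e₀, SimpleGraph.mem_edgeSet] at h
    have := SimpleGraph.degree_pos_iff_exists_adj (G := G) (v := o.head e₀)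
    have h1 : 0 < G.degree (o.head e₀) := this.mpr ⟨_, hadj⟩
    have h2 := G.degree_le_maxDegree (o.head e₀)
    omega
  set x : V → ℝ := fun u => if u = v₀ then (d : ℝ) else if G.Adj v₀ u then -1 else 0 with hx
  -- x ⬝ᵥ x = d^2 + d
  have hxx : x ⬝ᵥ x = (d : ℝ)^2 + d := by
    have hpt : ∀ u : V, x u * x u =
        (if u = v₀ then (d:ℝ)^2 else 0) + (if u ≠ v₀ ∧ G.Adj v₀ u then 1 else 0) := by
      intro u
      by_cases h1 : u = v₀
      · subst h1
        have hxv : x u = d := by simp [hx]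
        rw [hxv, if_pos rfl, if_neg (fun hc => hc.1 rfl)]
        ring
      · by_cases h2 : G.Adj v₀ u <;> simp [hx, h1, h2]
    rw [dotProduct, Finset.sum_congr rfl fun u _ => hpt u, Finset.sum_add_distrib,
      Finset.sum_ite_eq' Finset.univ v₀ (fun _ => (d:ℝ)^2)]
    have hcount : ∑ u : V, (if u ≠ v₀ ∧ G.Adj v₀ u then (1:ℝ) else 0) = d := by
      have : ∀ u : V, (if u ≠ v₀ ∧ G.Adj v₀ u then (1:ℝ) else 0)
          = if G.Adj v₀ u then 1 else 0 := by
        intro u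
        by_cases h2 : G.Adj v₀ u
        · rw [if_pos h2, if_pos ⟨fun he => G.irrefl (he ▸ h2), h2⟩]
        · rw [if_neg h2, if_neg (fun hc => h2 hc.2)]
      rw [Finset.sum_congr rfl fun u _ => this u]
      rw [Finset.sum_boole]
      have hfil : (Finset.univ.filter fun u => G.Adj v₀ u) = G.neighborFinset v₀ :=
        (SimpleGraph.neighborFinset_eq_filter G).symm
      rw [hfil, SimpleGraph.card_neighborFinset_eq_degree, ← hv₀]
    rw [hcount, if_pos (Finset.mem_univ v₀)]
  -- the Rayleigh quotient of x is at least d + 1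
  have hL : x ⬝ᵥ (((bMat G o)ᵀ * bMat G o) *ᵥ x)
      = (bMat G o *ᵥ x) ⬝ᵥ (bMat G o *ᵥ x) := by
    rw [← Matrix.mulVec_mulVec, Matrix.dotProduct_mulVec, Matrix.vecMul_transpose]
  set S : Finset G.edgeSet := Finset.univ.filter (fun e : G.edgeSet => v₀ ∈ (e : Sym2 V))
    with hS
  have hcardS : S.card = d := by
    rw [hv₀, ← SimpleGraph.card_incidenceFinset_eq_degree]
    apply Finset.card_bij (fun (e : G.edgeSet) _ => (e : Sym2 V))
    · intro e he
      rw [SimpleGraph.mem_incidenceFinset]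
      exact ⟨e.2, (Finset.mem_filter.mp he).2⟩
    · intro e₁ _ e₂ _ h
      exact Subtype.ext h
    · intro e' he'
      rw [SimpleGraph.mem_incidenceFinset] at he'
      exact ⟨⟨e', he'.1⟩, Finset.mem_filter.mpr ⟨Finset.mem_univ _, he'.2⟩, rfl⟩
  have hsq : ∀ e ∈ S, (bMat G o *ᵥ x) e * (bMat G o *ᵥ x) e = ((d:ℝ) + 1)^2 := by
    intro e he
    have hv₀e : v₀ ∈ (e : Sym2 V) := (Finset.mem_filter.mp he).2
    have hadj : G.Adj (o.head e) (o.tail e) := by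
      have h := e.2
      rwa [o.consistent e, SimpleGraph.mem_edgeSet] at h
    rw [bMat_mulVec]
    rw [o.consistent e, Sym2.mem_iff] at hv₀e
    rcases hv₀e with h | h
    · have hxh : x (o.head e) = d := by
        show (if o.head e = v₀ then (d:ℝ) else if G.Adj v₀ (o.head e) then -1 else 0) = d
        rw [if_pos h.symm]
      have hne : o.tail e ≠ v₀ := fun hc => G.irrefl (h ▸ hc ▸ hadj)
      have hat : G.Adj v₀ (o.tail e) := h ▸ hadj
      have hxt : x (o.tail e) = -1 := by
        show (if o.tail e = v₀ then (d:ℝ) else if G.Adj v₀ (o.tail e) then -1 else 0) = -1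
        rw [if_neg hne, if_pos hat]
      rw [hxh, hxt]; ring
    · have hxt : x (o.tail e) = d := by
        show (if o.tail e = v₀ then (d:ℝ) else if G.Adj v₀ (o.tail e) then -1 else 0) = d
        rw [if_pos h.symm]
      have hne : o.head e ≠ v₀ := fun hc => G.irrefl (h ▸ hc ▸ hadj)
      have hah : G.Adj v₀ (o.head e) := h ▸ hadj.symm
      have hxh : x (o.head e) = -1 := by
        show (if o.head e = v₀ then (d:ℝ) else if G.Adj v₀ (o.head e) then -1 else 0) = -1
        rw [if_neg hne, if_pos hah]
      rw [hxh, hxt]; ring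
  have hlow : (d:ℝ) * ((d:ℝ)+1)^2 ≤ x ⬝ᵥ (((bMat G o)ᵀ * bMat G o) *ᵥ x) := by
    rw [hL, dotProduct]
    calc (d:ℝ) * ((d:ℝ)+1)^2
        = ∑ e ∈ S, (bMat G o *ᵥ x) e * (bMat G o *ᵥ x) e := by
          rw [Finset.sum_congr rfl hsq, Finset.sum_const, hcardS, nsmul_eq_mul]
      _ ≤ ∑ e : G.edgeSet, (bMat G o *ᵥ x) e * (bMat G o *ᵥ x) e :=
          Finset.sum_le_sum_of_subset_of_nonneg (Finset.subset_univ S)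
            (fun e _ _ => mul_self_nonneg _)
  -- combine with the Rayleigh upper bound
  have hherm := isHermitian_transpose_mul_self' (bMat G o)
  have hgr := isGreatest_spectrum (M := (bMat G o)ᵀ * bMat G o) hherm
  set m : ℝ := Finset.univ.sup' Finset.univ_nonempty hherm.eigenvalues with hm
  have hup := rayleigh_le hherm (c := m)
    (fun i => Finset.le_sup' hherm.eigenvalues (Finset.mem_univ i)) x
  have hsup : sSup (spectrum ℝ ((bMat G o)ᵀ * bMat G o)) = m := hgr.csSup_eq
  rw [hsup]
  have hfinal : (d:ℝ) * ((d:ℝ)+1)^2 ≤ m * ((d:ℝ)^2 + d) := by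
    rw [← hxx]
    exact hlow.trans hup
  have hdr : (1:ℝ) ≤ (d:ℝ) := by exact_mod_cast hd1
  have hpos : (0:ℝ) < (d:ℝ) * ((d:ℝ)+1) := by nlinarith
  nlinarith

end Comb

/-- `λ₁ ≤ max {μ₁, 3·max_e △(e)}`, and if the number of triangles of
`G` is at most `⌊(Δ(G)+1)/3⌋` then `λ₁ = μ₁`, where `λ₁` and `μ₁` are the largest
eigenvalues of `H(G)` and of the Laplacian `L(G) = Bᵀ B` respectively. -/
theorem statement18 (G : SimpleGraph V) [Nonempty G.edgeSet]
    (o : Orientation G) (τ : TriOrientation G) :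
    sSup (spectrum ℝ (helm G o τ)) ≤
      max (sSup (spectrum ℝ ((bMat G o)ᵀ * bMat G o)))
        (3 * (((Finset.univ.sup fun e : G.edgeSet => triDeg G (e : Sym2 V)) : ℕ) : ℝ)) ∧
    (Fintype.card (Triangle G) ≤ (G.maxDegree + 1) / 3 →
      sSup (spectrum ℝ (helm G o τ)) = sSup (spectrum ℝ ((bMat G o)ᵀ * bMat G o))) := by
  classical
  have hVne : Nonempty V := ⟨o.head (Classical.arbitrary _)⟩
  set B : Matrix G.edgeSet V ℝ := bMat G o with hB
  set C : Matrix (Triangle G) G.edgeSet ℝ := cMat G o τ with hC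
  set A : Matrix G.edgeSet G.edgeSet ℝ := B * Bᵀ with hA
  set B2 : Matrix G.edgeSet G.edgeSet ℝ := Cᵀ * C with hB2
  set L : Matrix V V ℝ := Bᵀ * B with hL
  have hHelm : helm G o τ = A + B2 := rfl
  have hCB : C * B = 0 := cMat_mul_bMat_eq_zero G o τ
  have hBtCt : Bᵀ * Cᵀ = 0 := by
    rw [← Matrix.transpose_mul, hCB, Matrix.transpose_zero]
  have hAB2 : A * B2 = 0 := by
    rw [hA, hB2, Matrix.mul_assoc, ← Matrix.mul_assoc Bᵀ Cᵀ C, hBtCt, Matrix.zero_mul, Matrix.mul_zero]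
  have hCtCB : B2 * B = 0 := by
    rw [hB2, Matrix.mul_assoc, hCB, Matrix.mul_zero]
  have hhermL : L.IsHermitian := isHermitian_transpose_mul_self' B
  have hhermA : A.IsHermitian := isHermitian_mul_transpose_self' B
  have hhermB2 : B2.IsHermitian := isHermitian_transpose_mul_self' C
  have hhermH : (helm G o τ).IsHermitian := by rw [hHelm]; exact hhermA.add hhermB2
  have hgrL := isGreatest_spectrum (M := L) hhermL
  have hgrH := isGreatest_spectrum (M := helm G o τ) hhermH
  have hsupL : sSup (spectrum ℝ L) =
      Finset.univ.sup' Finset.univ_nonempty hhermL.eigenvalues := hgrL.csSup_eq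
  have hsupH : sSup (spectrum ℝ (helm G o τ)) =
      Finset.univ.sup' Finset.univ_nonempty hhermH.eigenvalues := hgrH.csSup_eq
  set maxtri : ℕ := Finset.univ.sup fun e : G.edgeSet => triDeg G (e : Sym2 V) with hmt
  have hmt0 : (0:ℝ) ≤ 3 * (maxtri : ℝ) := by positivity
  have hΔμ : (G.maxDegree : ℝ) + 1 ≤ sSup (spectrum ℝ L) := maxDegree_lt_sSup_spec G o
  have hμ0 : (0:ℝ) ≤ sSup (spectrum ℝ L) := by
    have : (0:ℝ) ≤ (G.maxDegree : ℝ) + 1 := by positivity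
    linarith
  have hrowB2 : ∀ e : G.edgeSet, ∑ f : G.edgeSet, |B2 e f| ≤ 3 * (maxtri : ℝ) := by
    intro e
    refine (rowsum_CtC G o τ e).trans ?_
    have h1 : triDeg G (e : Sym2 V) ≤ maxtri :=
      Finset.le_sup (f := fun e : G.edgeSet => triDeg G (e : Sym2 V)) (Finset.mem_univ e)
    have h2 : (triDeg G (e : Sym2 V) : ℝ) ≤ (maxtri : ℝ) := by exact_mod_cast h1
    linarith
  -- the upper bound on every H-eigenvalue
  have hub : ∀ lam ∈ spectrum ℝ (helm G o τ),
      lam ≤ max (sSup (spectrum ℝ L)) (3 * (maxtri : ℝ)) := by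
    intro lam hlam
    obtain ⟨xv, hx0, hxe⟩ := mem_spectrum_iff.mp hlam
    rcases le_or_gt lam 0 with hneg | hpos
    · exact hneg.trans (hmt0.trans (le_max_right _ _))
    rw [hHelm, Matrix.add_mulVec] at hxe
    by_cases hAx : A *ᵥ xv = 0
    · have hB2x : B2 *ᵥ xv = lam • xv := by rwa [hAx, zero_add] at hxe
      exact (eig_le_rowsum hx0 hB2x hrowB2).trans (le_max_right _ _)
    · have hA2 : A *ᵥ (A *ᵥ xv) = lam • (A *ᵥ xv) := by
        have h2 : A *ᵥ (B2 *ᵥ xv) = 0 := by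
          rw [Matrix.mulVec_mulVec, hAB2, Matrix.zero_mulVec]
        have h1 : A *ᵥ (A *ᵥ xv + B2 *ᵥ xv) = A *ᵥ (A *ᵥ xv) := by
          rw [Matrix.mulVec_add, h2, add_zero]
        rw [← h1, hxe, Matrix.mulVec_smul]
      set z : G.edgeSet → ℝ := A *ᵥ xv with hz
      set w : V → ℝ := Bᵀ *ᵥ z with hw
      have hLw : L *ᵥ w = lam • w := by
        rw [hw, Matrix.mulVec_mulVec, hL, Matrix.mul_assoc, ← Matrix.mulVec_mulVec z Bᵀ (B * Bᵀ),
          ← hA, hA2, Matrix.mulVec_smul]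
      have hBw : B *ᵥ w = lam • z := by
        rw [hw, Matrix.mulVec_mulVec, ← hA, hA2]
      have hw0 : w ≠ 0 := by
        intro hwz
        rw [hwz, Matrix.mulVec_zero] at hBw
        exact hAx (by
          have := smul_eq_zero.mp hBw.symm
          rcases this with h | h
          · exact absurd h (ne_of_gt hpos)
          · exact h)
      have hmem : lam ∈ spectrum ℝ L := mem_spectrum_iff.mpr ⟨w, hw0, hLw⟩
      have hle : lam ≤ sSup (spectrum ℝ L) := by rw [hsupL]; exact hgrL.2 hmem
      exact hle.trans (le_max_left _ _)
  constructor
  · exact Real.sSup_le hub (le_max_of_le_right hmt0)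
  · intro hcard
    -- 3 * maxtri ≤ Δ + 1 ≤ μ₁
    have hmtle : maxtri ≤ Fintype.card (Triangle G) := by
      refine Finset.sup_le fun e _ => ?_
      rw [triDeg, ← Finset.card_univ]
      exact Finset.card_filter_le _ _
    have h3m : 3 * (maxtri : ℝ) ≤ (G.maxDegree : ℝ) + 1 := by
      have hn : 3 * maxtri ≤ G.maxDegree + 1 := by omega
      exact_mod_cast hn
    have hmaxeq : max (sSup (spectrum ℝ L)) (3 * (maxtri : ℝ)) = sSup (spectrum ℝ L) :=
      max_eq_left (h3m.trans hΔμ)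
    refine le_antisymm ?_ ?_
    · exact Real.sSup_le (fun lam hlam => (hub lam hlam).trans_eq hmaxeq) hμ0
    · -- the largest Laplacian eigenvalue is an H-eigenvalue
      have hμpos : (0:ℝ) < sSup (spectrum ℝ L) := by
        have : (0:ℝ) < (G.maxDegree : ℝ) + 1 := by positivity
        linarith
      have hmemL : sSup (spectrum ℝ L) ∈ spectrum ℝ L := by
        rw [hsupL]; exact hgrL.1
      obtain ⟨y, hy0, hLy⟩ := mem_spectrum_iff.mp hmemL
      set xz : G.edgeSet → ℝ := B *ᵥ y with hxz
      have hHx : helm G o τ *ᵥ xz = sSup (spectrum ℝ L) • xz := by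
        have h2 : B2 *ᵥ xz = 0 := by
          rw [hxz, Matrix.mulVec_mulVec, hCtCB, Matrix.zero_mulVec]
        have h3 : A *ᵥ xz = sSup (spectrum ℝ L) • xz := by
          rw [hxz, Matrix.mulVec_mulVec, hA, Matrix.mul_assoc, ← hL,
            ← Matrix.mulVec_mulVec y B L, hLy, Matrix.mulVec_smul]
        rw [hHelm, Matrix.add_mulVec, h2, add_zero, h3]
      have hxz0 : xz ≠ 0 := by
        intro hc
        have h1 : Bᵀ *ᵥ xz = sSup (spectrum ℝ L) • y := by
          rw [hxz, Matrix.mulVec_mulVec, ← hL, hLy]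
        rw [hc, Matrix.mulVec_zero] at h1
        rcases smul_eq_zero.mp h1.symm with h | h
        · exact absurd h (ne_of_gt hμpos)
        · exact hy0 h
      have hmemH : sSup (spectrum ℝ L) ∈ spectrum ℝ (helm G o τ) :=
        mem_spectrum_iff.mpr ⟨xz, hxz0, hHx⟩
      exact le_csSup hgrH.bddAbove hmemH

end HelmPaper
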